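/- In A_5 = K[x,y,z]/(x^2, y^2, xz, yz, xy - z^3) with maximal ideal m = ⟨x,y,z,z^2,z^3⟩ and Soc A_5 = ⟨z^3⟩, for any two hyperplanes U, U' of m complementary to ⟨z^3⟩ there exists a K-algebra automorphism φ of A_5 with φ(U) = U'. -/

import Mathlib

set_option synthInstance.maxHeartbeats 1000000
set_option maxHeartbeats 1000000
set_option linter.unusedSectionVars false
open MvPolynomial

noncomputable section Stmt15Aux
variable (K : Type*) [Field K] [CharZero K]

def s15I : Ideal (MvPolynomial (Fin 3) K) :=
  Ideal.span {X 0 ^ 2, X 1 ^ 2, X 0 * X 2, X 1 * X 2, X 0 * X 1 - X 2 ^ 3}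

abbrev s15A := MvPolynomial (Fin 3) K ⧸ s15I K

def s15x : s15A K := Ideal.Quotient.mk (s15I K) (X 0)
def s15y : s15A K := Ideal.Quotient.mk (s15I K) (X 1)
def s15z : s15A K := Ideal.Quotient.mk (s15I K) (X 2)

variable {K}

lemma s15_mem (p : MvPolynomial (Fin 3) K)
    (hp : p ∈ ({X 0 ^ 2, X 1 ^ 2, X 0 * X 2, X 1 * X 2, X 0 * X 1 - X 2 ^ 3} :
      Set (MvPolynomial (Fin 3) K))) :
    Ideal.Quotient.mk (s15I K) p = 0 := by
  rw [Ideal.Quotient.eq_zero_iff_mem, s15I]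
  exact Ideal.subset_span hp

lemma s15_x2 : (s15x K) ^ 2 = 0 := by
  have := s15_mem (K := K) (X 0 ^ 2) (by simp)
  simpa [s15x, map_pow] using this

lemma s15_y2 : (s15y K) ^ 2 = 0 := by
  have := s15_mem (K := K) (X 1 ^ 2) (by simp)
  simpa [s15y, map_pow] using this

lemma s15_xz : s15x K * s15z K = 0 := by
  have := s15_mem (K := K) (X 0 * X 2) (by simp)
  simpa [s15x, s15z, map_mul] using this

lemma s15_yz : s15y K * s15z K = 0 := by
  have := s15_mem (K := K) (X 1 * X 2) (by simp)
  simpa [s15y, s15z, map_mul] using this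

lemma s15_xy : s15x K * s15y K = s15z K ^ 3 := by
  have := s15_mem (K := K) (X 0 * X 1 - X 2 ^ 3) (by simp)
  have h : Ideal.Quotient.mk (s15I K) (X 0 * X 1) = Ideal.Quotient.mk (s15I K) (X 2 ^ 3) := by
    rw [← sub_eq_zero, ← map_sub]; exact this
  simpa [s15x, s15y, s15z, map_mul, map_pow] using h

lemma s15_z4 : (s15z K) ^ 4 = 0 := by
  have h1 := s15_xy (K := K)
  have h2 := s15_xz (K := K)
  linear_combination (s15y K) * h2 - (s15z K) * h1

/-- the images of the variables under the endomorphism with parameters a b c d -/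
def s15v (a b c d : K) : Fin 3 → s15A K :=
  ![s15x K + algebraMap K _ a * s15z K ^ 3,
    s15y K + algebraMap K _ b * s15z K ^ 3,
    s15z K + algebraMap K _ c * s15z K ^ 2 + algebraMap K _ d * s15z K ^ 3]

/-- the endomorphism of A with parameters a b c d -/
lemma s15v_ker (a b c d : K) : s15I K ≤ RingHom.ker (aeval (s15v a b c d) :
        MvPolynomial (Fin 3) K →ₐ[K] s15A K).toRingHom := by
    show Ideal.span _ ≤ _
    rw [Ideal.span_le]
    have hx2 := s15_x2 (K := K); have hy2 := s15_y2 (K := K)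
    have hxz := s15_xz (K := K); have hyz := s15_yz (K := K)
    have hxy := s15_xy (K := K); have hz4 := s15_z4 (K := K)
    set x := s15x K; set y := s15y K; set z := s15z K
    set A' := algebraMap K (s15A K) a
    set B' := algebraMap K (s15A K) b
    set C' := algebraMap K (s15A K) c
    set D' := algebraMap K (s15A K) d
    rintro p (rfl | rfl | rfl | rfl | rfl) <;>
      simp only [SetLike.mem_coe, RingHom.mem_ker, AlgHom.coe_toRingHom, Ideal.mem_comap, Ideal.mem_bot,
        AlgHom.toRingHom_eq_coe, RingHom.coe_coe, map_mul, map_pow, map_sub, aeval_X, s15v,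
        Matrix.cons_val_zero, Matrix.cons_val_one, Matrix.head_cons,
        Matrix.cons_val_two, Matrix.tail_cons]
    · linear_combination hx2 + (2*A'*z^2)*hxz + (A'^2*z^2)*hz4
    · linear_combination hy2 + (2*B'*z^2)*hyz + (B'^2*z^2)*hz4
    · linear_combination (1 + C'*z + D'*z^2)*hxz + (A' + A'*C'*z + A'*D'*z^2)*hz4
    · linear_combination (1 + C'*z + D'*z^2)*hyz + (B' + B'*C'*z + B'*D'*z^2)*hz4
    · linear_combination hxy + (A'*z^2)*hyz + (B'*z^2)*hxz + (A'*B'*z^2)*hz4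
        - (3*(C' + D'*z) + 3*z*(C' + D'*z)^2 + z^2*(C' + D'*z)^3)*hz4

def s15f (a b c d : K) : s15A K →ₐ[K] s15A K :=
  Ideal.Quotient.liftₐ (s15I K) (aeval (s15v a b c d)) (by
    intro p hp
    exact s15v_ker a b c d hp)

lemma s15f_mk (a b c d : K) (p : MvPolynomial (Fin 3) K) :
    s15f a b c d (Ideal.Quotient.mk (s15I K) p) = aeval (s15v a b c d) p := rfl

lemma s15f_x (a b c d : K) :
    s15f a b c d (s15x K) = s15x K + algebraMap K _ a * s15z K ^ 3 := by
  rw [s15x, s15f_mk, aeval_X]; rfl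

lemma s15f_y (a b c d : K) :
    s15f a b c d (s15y K) = s15y K + algebraMap K _ b * s15z K ^ 3 := by
  rw [s15y, s15f_mk, aeval_X]; rfl

lemma s15f_z (a b c d : K) :
    s15f a b c d (s15z K) =
      s15z K + algebraMap K _ c * s15z K ^ 2 + algebraMap K _ d * s15z K ^ 3 := by
  rw [s15z, s15f_mk, aeval_X]; rfl

lemma s15_algHom_ext {B : Type*} [Semiring B] [Algebra K B] {f g : s15A K →ₐ[K] B}
    (h0 : f (s15x K) = g (s15x K)) (h1 : f (s15y K) = g (s15y K))
    (h2 : f (s15z K) = g (s15z K)) : f = g := by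
  apply Ideal.Quotient.algHom_ext
  apply MvPolynomial.algHom_ext
  intro i
  fin_cases i
  · exact h0
  · exact h1
  · exact h2

lemma s15_comp (a b c d : K) :
    (s15f a b c d).comp (s15f (-a) (-b) (-c) (2*c^2-d)) = AlgHom.id K (s15A K) := by
  have hxz := s15_xz (K := K); have hyz := s15_yz (K := K)
  have hz4 := s15_z4 (K := K)
  set x := s15x K; set y := s15y K; set z := s15z K
  set A' := algebraMap K (s15A K) a with hA
  set B' := algebraMap K (s15A K) b with hB
  set C' := algebraMap K (s15A K) c with hC
  set D' := algebraMap K (s15A K) d with hD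
  apply s15_algHom_ext <;>
    simp only [AlgHom.comp_apply, AlgHom.coe_id, id_eq] <;>
    simp only [s15f_x, s15f_y, s15f_z, map_add, map_mul, map_pow, AlgHom.commutes,
      map_neg, map_sub, map_ofNat]
  · linear_combination (-(A')*(3*(C'+D'*z) + 3*z*(C'+D'*z)^2 + z^2*(C'+D'*z)^3))*hz4
  · linear_combination (-(B')*(3*(C'+D'*z) + 3*z*(C'+D'*z)^2 + z^2*(C'+D'*z)^3))*hz4
  · linear_combination ((-C')*((C'^2+2*D') + 2*C'*D'*z + D'^2*z^2)
        + (2*C'^2-D')*(3*(C'+D'*z) + 3*z*(C'+D'*z)^2 + z^2*(C'+D'*z)^3))*hz4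

lemma s15f_z2 (a b c d : K) :
    s15f a b c d (s15z K ^ 2) = s15z K ^ 2 + algebraMap K _ (2*c) * s15z K ^ 3 := by
  have hz4 := s15_z4 (K := K)
  rw [map_pow, s15f_z]
  set z := s15z K
  set C' := algebraMap K (s15A K) c with hC
  set D' := algebraMap K (s15A K) d with hD
  rw [map_mul, map_ofNat]
  linear_combination ((C'^2+2*D') + 2*C'*D'*z + D'^2*z^2)*hz4

lemma s15f_z3 (a b c d : K) :
    s15f a b c d (s15z K ^ 3) = s15z K ^ 3 := by
  have hz4 := s15_z4 (K := K)
  rw [map_pow, s15f_z]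
  set z := s15z K
  set C' := algebraMap K (s15A K) c with hC
  set D' := algebraMap K (s15A K) d with hD
  linear_combination (3*(C'+D'*z) + 3*z*(C'+D'*z)^2 + z^2*(C'+D'*z)^3)*hz4

/-- the automorphism with parameters a b c d -/
def s15e (a b c d : K) : s15A K ≃ₐ[K] s15A K :=
  AlgEquiv.ofAlgHom (s15f a b c d) (s15f (-a) (-b) (-c) (2*c^2-d))
    (s15_comp a b c d)
    (by
      have h := s15_comp (-a) (-b) (-c) (2*c^2-d)
      simp only [neg_neg] at h
      rwa [show (2*(-c)^2-(2*c^2-d)) = d from by ring] at h)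

lemma s15e_apply (a b c d : K) (w : s15A K) : s15e a b c d w = s15f a b c d w := rfl

lemma s15_main (U : Submodule K (s15A K))
    (h1 : U ⊔ Submodule.span K {s15z K ^ 3} =
      Submodule.span K {s15x K, s15y K, s15z K, s15z K ^ 2, s15z K ^ 3})
    (h2 : U ⊓ Submodule.span K {s15z K ^ 3} = ⊥) :
    ∃ φ : s15A K ≃ₐ[K] s15A K,
      (Submodule.span K {s15x K, s15y K, s15z K, s15z K ^ 2}).map φ.toLinearMap = U := by
  have asmul : ∀ (t : K) (w : s15A K), algebraMap K (s15A K) t * w = t • w :=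
    fun t w => (Algebra.smul_def t w).symm
  set S : Submodule K (s15A K) := Submodule.span K {s15z K ^ 3} with hS
  have hzS : s15z K ^ 3 ∈ S := Submodule.subset_span rfl
  -- decompose the four basis vectors along U ⊕ S
  have hdec : ∀ w : s15A K,
      w ∈ Submodule.span K {s15x K, s15y K, s15z K, s15z K ^ 2, s15z K ^ 3} →
      ∃ u ∈ U, ∃ t : K, u = w - t • s15z K ^ 3 := by
    intro w hw
    rw [← h1] at hw
    obtain ⟨u, hu, s, hs, huw⟩ := Submodule.mem_sup.mp hw
    obtain ⟨t, rfl⟩ := Submodule.mem_span_singleton.mp hs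
    exact ⟨u, hu, t, eq_sub_of_add_eq huw⟩
  obtain ⟨u1, hu1, t1, hx1⟩ := hdec (s15x K) (Submodule.subset_span (by simp))
  obtain ⟨u2, hu2, t2, hy1⟩ := hdec (s15y K) (Submodule.subset_span (by simp))
  obtain ⟨u3, hu3, t3, hz1⟩ := hdec (s15z K) (Submodule.subset_span (by simp))
  obtain ⟨u4, hu4, t4, hz2⟩ := hdec (s15z K ^ 2) (Submodule.subset_span (by simp))
  refine ⟨s15e (-t1) (-t2) (-(t4/2)) (-t3 + t4 * (t4/2)), ?_⟩
  set φ := s15e (-t1) (-t2) (-(t4/2)) (-t3 + t4 * (t4/2)) with hφdef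
  -- images of the four generators
  have hφx : φ (s15x K) = u1 := by
    rw [hφdef, s15e_apply, s15f_x, asmul, hx1]; module
  have hφy : φ (s15y K) = u2 := by
    rw [hφdef, s15e_apply, s15f_y, asmul, hy1]; module
  have hφz2 : φ (s15z K ^ 2) = u4 := by
    rw [hφdef, s15e_apply, s15f_z2, asmul, hz2]; module
  have hφz : φ (s15z K) = u3 + (-(t4/2)) • u4 := by
    rw [hφdef, s15e_apply, s15f_z, asmul, asmul, hz1, hz2]; module
  set V : Submodule K (s15A K) :=
    (Submodule.span K {s15x K, s15y K, s15z K, s15z K ^ 2}).map φ.toLinearMap with hV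
  have hVU : V ≤ U := by
    rw [hV, Submodule.map_span, Submodule.span_le]
    rintro _ ⟨w, hw, rfl⟩
    simp only [Set.mem_insert_iff, Set.mem_singleton_iff] at hw
    rcases hw with rfl | rfl | rfl | rfl
    · simpa [hφx] using hu1
    · simpa [hφy] using hu2
    · simp only [AlgEquiv.toLinearMap_apply, hφz]
      exact U.add_mem hu3 (U.smul_mem _ hu4)
    · simpa [hφz2] using hu4
  -- generators of m lie in V ⊔ S
  have hφxV : φ (s15x K) ∈ V := Submodule.mem_map_of_mem (Submodule.subset_span (by simp))
  have hφyV : φ (s15y K) ∈ V := Submodule.mem_map_of_mem (Submodule.subset_span (by simp))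
  have hφzV : φ (s15z K) ∈ V := Submodule.mem_map_of_mem (Submodule.subset_span (by simp))
  have hφz2V : φ (s15z K ^ 2) ∈ V := Submodule.mem_map_of_mem (Submodule.subset_span (by simp))
  have hxVS : s15x K ∈ V ⊔ S := by
    have he : s15x K = φ (s15x K) + t1 • s15z K ^ 3 := by rw [hφx, hx1]; module
    rw [he]
    exact Submodule.add_mem _ (Submodule.mem_sup_left hφxV)
      (Submodule.mem_sup_right (S.smul_mem _ hzS))
  have hyVS : s15y K ∈ V ⊔ S := by
    have he : s15y K = φ (s15y K) + t2 • s15z K ^ 3 := by rw [hφy, hy1]; module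
    rw [he]
    exact Submodule.add_mem _ (Submodule.mem_sup_left hφyV)
      (Submodule.mem_sup_right (S.smul_mem _ hzS))
  have hz2VS : s15z K ^ 2 ∈ V ⊔ S := by
    have he : s15z K ^ 2 = φ (s15z K ^ 2) + t4 • s15z K ^ 3 := by rw [hφz2, hz2]; module
    rw [he]
    exact Submodule.add_mem _ (Submodule.mem_sup_left hφz2V)
      (Submodule.mem_sup_right (S.smul_mem _ hzS))
  have hzVS : s15z K ∈ V ⊔ S := by
    have he : s15z K = φ (s15z K) + (t4/2) • φ (s15z K ^ 2) + t3 • s15z K ^ 3 := by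
      rw [hφz, hφz2, hz1]; module
    rw [he]
    exact Submodule.add_mem _ (Submodule.add_mem _ (Submodule.mem_sup_left hφzV)
      (Submodule.mem_sup_left (V.smul_mem _ hφz2V)))
      (Submodule.mem_sup_right (S.smul_mem _ hzS))
  have hmVS : Submodule.span K {s15x K, s15y K, s15z K, s15z K ^ 2, s15z K ^ 3} ≤ V ⊔ S := by
    rw [Submodule.span_le]
    rintro w hw
    simp only [Set.mem_insert_iff, Set.mem_singleton_iff] at hw
    rcases hw with rfl | rfl | rfl | rfl | rfl
    · exact hxVS
    · exact hyVS
    · exact hzVS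
    · exact hz2VS
    · exact Submodule.mem_sup_right hzS
  have hUm : U ≤ Submodule.span K {s15x K, s15y K, s15z K, s15z K ^ 2, s15z K ^ 3} := by
    rw [← h1]; exact le_sup_left
  have hUV : U ≤ V := by
    intro u hu
    obtain ⟨v, hv, s, hs, hvs⟩ := Submodule.mem_sup.mp (hmVS (hUm hu))
    have husub : u - v ∈ U ⊓ S := by
      constructor
      · exact U.sub_mem hu (hVU hv)
      · rw [← hvs]; simpa using hs
    rw [h2, Submodule.mem_bot, sub_eq_zero] at husub
    rwa [husub]
  exact le_antisymm hVU hUV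

end Stmt15Aux

/-- In `A_5 = K[x,y,z]/(x^2, y^2, xz, yz, xy - z^3)` with maximal ideal
`m = ⟨x, y, z, z^2, z^3⟩_K` and `Soc A_5 = ⟨z^3⟩`, for any two hyperplanes `U, U'` of `m`
complementary to `⟨z^3⟩` there exists a `K`-algebra automorphism `φ` of `A_5` with
`φ(U) = U'`. -/
theorem stmt15 (K : Type*) [Field K] [CharZero K] :
    let I : Ideal (MvPolynomial (Fin 3) K) :=
      Ideal.span {X 0 ^ 2, X 1 ^ 2, X 0 * X 2, X 1 * X 2, X 0 * X 1 - X 2 ^ 3};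
    let A := MvPolynomial (Fin 3) K ⧸ I;
    let q : MvPolynomial (Fin 3) K →+* A := Ideal.Quotient.mk I;
    let m : Submodule K A :=
      Submodule.span K {q (X 0), q (X 1), q (X 2), q (X 2 ^ 2), q (X 2 ^ 3)};
    let c : A := q (X 2 ^ 3);
    ∀ U U' : Submodule K A,
      U ⊔ Submodule.span K {c} = m → U ⊓ Submodule.span K {c} = ⊥ →
      U' ⊔ Submodule.span K {c} = m → U' ⊓ Submodule.span K {c} = ⊥ →
      ∃ φ : A ≃ₐ[K] A, U.map φ.toLinearMap = U' := by
  intro I A q m c U U' h1 h2 h3 h4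
  have hc : c = s15z K ^ 3 := map_pow q (X 2) 3
  have hq2 : q (X 2 ^ 2) = s15z K ^ 2 := map_pow q (X 2) 2
  have hm : m = Submodule.span K {s15x K, s15y K, s15z K, s15z K ^ 2, s15z K ^ 3} := by
    show Submodule.span K {q (X 0), q (X 1), q (X 2), q (X 2 ^ 2), q (X 2 ^ 3)} = _
    rw [hq2, show q (X 2 ^ 3) = s15z K ^ 3 from map_pow q (X 2) 3]
    rfl
  rw [hc] at h1 h2 h3 h4
  rw [hm] at h1 h3
  obtain ⟨φ, hφ⟩ := s15_main U h1 h2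
  obtain ⟨ψ, hψ⟩ := s15_main U' h3 h4
  refine ⟨φ.symm.trans ψ, ?_⟩
  have hcomp : (φ.symm.trans ψ).toLinearMap = ψ.toLinearMap.comp φ.symm.toLinearMap := rfl
  have hUs : U.map φ.symm.toLinearMap =
      Submodule.span K {s15x K, s15y K, s15z K, s15z K ^ 2} := by
    rw [← hφ, ← Submodule.map_comp]
    have : (φ.symm.toLinearMap.comp φ.toLinearMap) = LinearMap.id :=
      LinearMap.ext fun w => φ.symm_apply_apply w
    rw [this, Submodule.map_id]
  erw [hcomp, Submodule.map_comp, hUs, hψ]
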